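/- Suppose a family of kernels K_j(x,y), j ∈ ℤ, satisfies |K_j(x,y)| ≤ C·2^{2j}(1 + 2^{4j}|t|)^{-1/2} when |j − j₀| ≤ 2 and |K_j(x,y)| ≤ C·2^{2j}(1 + 2^{4j}|t|)^{-1} when |j − j₀| > 2, for some j₀ ∈ ℤ (possibly depending on t, x, y) and t ≠ 0. Then the sum K(x,y) = Σ_{j∈ℤ} K_j(x,y) converges absolutely and |K(x,y)| ≤ C'·|t|^{-1/2}. -/

import Mathlib

private lemma geom_nat' : Summable (fun n : ℕ => ((4:ℝ)⁻¹) ^ n) :=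
  summable_geometric_of_lt_one (by norm_num) (by norm_num)

private lemma geom_int_summable : Summable (fun j : ℤ => ((4:ℝ)⁻¹) ^ j.natAbs) := by
  apply Summable.of_nat_of_neg <;>
    · simp only [Int.natAbs_neg, Int.natAbs_natCast]; exact geom_nat'

private lemma geom_int_tsum : ∑' j : ℤ, ((4:ℝ)⁻¹) ^ j.natAbs = 5/3 := by
  have h1 : Summable (fun n : ℕ => ((4:ℝ)⁻¹) ^ ((n:ℤ)).natAbs) := by
    simp only [Int.natAbs_natCast]; exact geom_nat'
  have h2 : Summable (fun n : ℕ => ((4:ℝ)⁻¹) ^ ((-(n:ℤ))).natAbs) := by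
    simp only [Int.natAbs_neg, Int.natAbs_natCast]; exact geom_nat'
  rw [Summable.tsum_of_nat_of_neg (f := fun j : ℤ => ((4:ℝ)⁻¹) ^ j.natAbs) h1 h2]
  have e : ∑' n : ℕ, ((4:ℝ)⁻¹) ^ n = 4/3 := by
    rw [tsum_geometric_of_lt_one (by norm_num) (by norm_num)]; norm_num
  have e1 : ∑' n : ℕ, ((4:ℝ)⁻¹) ^ ((n:ℤ)).natAbs = 4/3 := by
    simp only [Int.natAbs_natCast]; exact e
  have e2 : ∑' n : ℕ, ((4:ℝ)⁻¹) ^ ((-(n:ℤ))).natAbs = 4/3 := by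
    simp only [Int.natAbs_neg, Int.natAbs_natCast]; exact e
  rw [e1, e2]
  norm_num

private lemma geom_conv (i : ℤ) : (2:ℝ) ^ (-(2 * |i|)) = ((4:ℝ)⁻¹) ^ i.natAbs := by
  have h4 : ((4:ℝ)⁻¹) = (2:ℝ) ^ (-2 : ℤ) := by norm_num
  rw [h4, ← zpow_natCast ((2:ℝ) ^ (-2:ℤ)), ← zpow_mul]
  congr 1
  rw [Int.abs_eq_natAbs]
  ring

/-- Dyadic summation: if `|K_j(x,y)| ≤ C·2^{2j}(1+2^{4j}|t|)^{-1/2}` for `|j−j₀| ≤ 2`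
and `|K_j(x,y)| ≤ C·2^{2j}(1+2^{4j}|t|)^{-1}` for `|j−j₀| > 2`, then
`Σ_j K_j(x,y)` converges absolutely with `|Σ_j K_j(x,y)| ≤ C'|t|^{-1/2}`. -/
theorem stmt6 (C : ℝ) (hC : 0 < C) :
    ∃ C' > (0:ℝ), ∀ (t : ℝ), t ≠ 0 →
      ∀ (K : ℤ → (EuclideanSpace ℝ (Fin 2)) → (EuclideanSpace ℝ (Fin 2)) → ℂ)
        (x y : EuclideanSpace ℝ (Fin 2)) (j₀ : ℤ),
      (∀ j : ℤ, |j - j₀| ≤ 2 →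
        ‖K j x y‖ ≤ C * (2:ℝ) ^ (2*j) * (1 + (2:ℝ) ^ (4*j) * |t|) ^ (-(1:ℝ)/2)) →
      (∀ j : ℤ, 2 < |j - j₀| →
        ‖K j x y‖ ≤ C * (2:ℝ) ^ (2*j) * (1 + (2:ℝ) ^ (4*j) * |t|)⁻¹) →
      Summable (fun j : ℤ => ‖K j x y‖) ∧
        ‖∑' j : ℤ, K j x y‖ ≤ C' * |t| ^ (-(1:ℝ)/2) := by
  refine ⟨12 * C, by positivity, ?_⟩
  intro t ht K x y j₀ hnear hfar
  have ha : (0:ℝ) < |t| := abs_pos.mpr ht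
  set a : ℝ := |t| with ha_def
  set s : ℝ := Real.sqrt a with hs_def
  have hs : 0 < s := Real.sqrt_pos.mpr ha
  have hs2 : s ^ 2 = a := Real.sq_sqrt ha.le
  have hts : a ^ (-(1:ℝ)/2) = s⁻¹ := by
    rw [neg_div, Real.rpow_neg ha.le, ← Real.sqrt_eq_rpow]
  set k : ℤ := Int.log 2 a⁻¹ with hk_def
  have hk1 : (2:ℝ) ^ k ≤ a⁻¹ := by
    have h := Int.zpow_log_le_self (b := 2) (r := a⁻¹) one_lt_two (inv_pos.mpr ha)
    rw [hk_def]
    exact_mod_cast h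
  have hk2 : a⁻¹ < (2:ℝ) ^ (k + 1) := by
    have h := Int.lt_zpow_succ_log_self (b := 2) one_lt_two a⁻¹
    rw [hk_def]
    exact_mod_cast h
  set m : ℤ := k / 4 with hm_def
  have hm1 : 4 * m ≤ k := by omega
  have hm2 : k ≤ 4 * m + 3 := by omega
  -- 2^{2m} ≤ s⁻¹
  have h2m : (2:ℝ) ^ (2*m) ≤ s⁻¹ := by
    have hsq : ((2:ℝ) ^ (2*m)) ^ 2 ≤ (s⁻¹) ^ 2 := by
      have e1 : ((2:ℝ) ^ (2*m)) ^ 2 = (2:ℝ) ^ (4*m) := by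
        rw [pow_two, ← zpow_add₀ (two_ne_zero : (2:ℝ) ≠ 0)]
        congr 1; ring
      have e2 : (s⁻¹) ^ 2 = a⁻¹ := by rw [inv_pow, hs2]
      rw [e1, e2]
      exact le_trans (zpow_le_zpow_right₀ one_le_two hm1) hk1
    exact (pow_le_pow_iff_left₀ (by positivity) (by positivity) two_ne_zero).mp hsq
  -- a⁻¹ 2^{-2(m+1)} ≤ s⁻¹
  have h2m' : a⁻¹ * (2:ℝ) ^ (-(2*(m+1))) ≤ s⁻¹ := by
    have hle : (2:ℝ) ^ (-(4*m+4)) ≤ a := by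
      have h1 : a⁻¹ ≤ (2:ℝ) ^ (4*m+4) :=
        le_trans hk2.le (zpow_le_zpow_right₀ one_le_two (by omega))
      have h2 := inv_anti₀ (inv_pos.mpr ha) h1
      rwa [inv_inv, ← zpow_neg] at h2
    have hsq : (a⁻¹ * (2:ℝ) ^ (-(2*(m+1)))) ^ 2 ≤ (s⁻¹) ^ 2 := by
      have e1 : (a⁻¹ * (2:ℝ) ^ (-(2*(m+1)))) ^ 2 = a⁻¹ * a⁻¹ * (2:ℝ) ^ (-(4*m+4)) := by
        have e0 : (2:ℝ) ^ (-(2*(m+1))) * (2:ℝ) ^ (-(2*(m+1))) = (2:ℝ) ^ (-(4*m+4)) := by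
          rw [← zpow_add₀ (two_ne_zero : (2:ℝ) ≠ 0)]; congr 1; ring
        rw [mul_pow, pow_two, pow_two, ← e0]
      have e2 : (s⁻¹) ^ 2 = a⁻¹ := by rw [inv_pow, hs2]
      rw [e1, e2]
      calc a⁻¹ * a⁻¹ * (2:ℝ) ^ (-(4*m+4)) ≤ a⁻¹ * a⁻¹ * a := by
            apply mul_le_mul_of_nonneg_left hle (by positivity)
        _ = a⁻¹ := by field_simp
    exact (pow_le_pow_iff_left₀ (by positivity) (by positivity) two_ne_zero).mp hsq
  -- geometric weight
  set G : ℤ → ℝ := fun j => ((4:ℝ)⁻¹) ^ (j - m).natAbs with hG_def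
  have hGpos : ∀ j, (0:ℝ) < G j := fun j => pow_pos (by norm_num) _
  have hGsum : Summable G := by
    have := (Equiv.subRight m).summable_iff
      (f := fun i : ℤ => ((4:ℝ)⁻¹) ^ i.natAbs)
    exact this.mpr geom_int_summable
  have hGtsum : ∑' j, G j = 5/3 := by
    have := (Equiv.subRight m).tsum_eq (f := fun i : ℤ => ((4:ℝ)⁻¹) ^ i.natAbs)
    rw [hG_def]
    simpa [Equiv.subRight] using this.trans geom_int_tsum
  -- G as a power of 2
  have hG2 : ∀ j : ℤ, G j = (2:ℝ) ^ (-(2 * |j - m|)) := fun j => (geom_conv (j - m)).symm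
  -- the dominating function
  set h : ℤ → ℝ := fun j =>
    4*C*s⁻¹*(G j) + (if |j - j₀| ≤ 2 then C*s⁻¹ else 0) with hh_def
  have key : ∀ j : ℤ, ‖K j x y‖ ≤ h j := by
    intro j
    have hterm1 : (0:ℝ) ≤ 4*C*s⁻¹*(G j) := by positivity
    by_cases hj : |j - j₀| ≤ 2
    · -- near case
      have hb := hnear j hj
      have hu : (0:ℝ) < (2:ℝ) ^ (4*j) * a := by positivity
      have h1 : (1 + (2:ℝ) ^ (4*j) * a) ^ (-(1:ℝ)/2)
          ≤ ((2:ℝ) ^ (4*j) * a) ^ (-(1:ℝ)/2) :=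
        Real.rpow_le_rpow_of_nonpos hu (le_add_of_nonneg_left zero_le_one) (by norm_num)
      have h2 : ((2:ℝ) ^ (4*j) * a) ^ (-(1:ℝ)/2) = ((2:ℝ)^(2*j))⁻¹ * s⁻¹ := by
        rw [Real.mul_rpow (by positivity) ha.le, hts]
        congr 1
        have e1 : (2:ℝ) ^ (4*j) = ((2:ℝ) ^ (2*j)) ^ (2:ℕ) := by
          rw [pow_two, ← zpow_add₀ (two_ne_zero : (2:ℝ) ≠ 0)]
          congr 1; ring
        rw [e1, ← Real.rpow_natCast ((2:ℝ)^(2*j)) 2, ← Real.rpow_mul (by positivity)]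
        have e3 : ((2:ℕ):ℝ) * (-(1:ℝ)/2) = -1 := by norm_num
        rw [e3, Real.rpow_neg_one]
      have h3 : ‖K j x y‖ ≤ C * s⁻¹ := by
        calc ‖K j x y‖ ≤ C * (2:ℝ) ^ (2*j) * ((1 + (2:ℝ) ^ (4*j) * a) ^ (-(1:ℝ)/2)) := hb
          _ ≤ C * (2:ℝ) ^ (2*j) * (((2:ℝ)^(2*j))⁻¹ * s⁻¹) := by
              rw [← h2]; exact mul_le_mul_of_nonneg_left h1 (by positivity)
          _ = C * s⁻¹ := by
              field_simp
      rw [hh_def]; simp only [if_pos hj]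
      linarith
    · -- far case
      push_neg at hj
      have hb := hfar j hj
      have hgoal : ‖K j x y‖ ≤ 4*C*s⁻¹*(G j) := by
        by_cases hjm : j ≤ m
        · have h1 : (1 + (2:ℝ) ^ (4*j) * a)⁻¹ ≤ 1 :=
            inv_le_one_of_one_le₀ (le_add_of_nonneg_right (by positivity))
          have e : (2:ℝ) ^ (2*j) = (2:ℝ) ^ (2*m) * G j := by
            rw [hG2 j, ← zpow_add₀ (two_ne_zero)]
            congr 1
            have : |j - m| = m - j := by rw [abs_of_nonpos (by omega : j - m ≤ 0)]; ring
            rw [this]; ring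
          calc ‖K j x y‖ ≤ C * (2:ℝ) ^ (2*j) * (1 + (2:ℝ) ^ (4*j) * a)⁻¹ := hb
            _ ≤ C * (2:ℝ) ^ (2*j) * 1 := by
                exact mul_le_mul_of_nonneg_left h1 (by positivity)
            _ = C * ((2:ℝ) ^ (2*m)) * G j := by rw [mul_one, e]; ring
            _ ≤ C * s⁻¹ * G j := by
                apply mul_le_mul_of_nonneg_right _ (hGpos j).le
                exact mul_le_mul_of_nonneg_left h2m hC.le
            _ ≤ 4*C*s⁻¹*(G j) := by nlinarith [hGpos j, mul_pos hC (inv_pos.mpr hs)]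
        · push_neg at hjm
          have hu : (0:ℝ) < (2:ℝ) ^ (4*j) * a := by positivity
          have h1 : (1 + (2:ℝ) ^ (4*j) * a)⁻¹ ≤ ((2:ℝ) ^ (4*j) * a)⁻¹ :=
            inv_anti₀ hu (le_add_of_nonneg_left zero_le_one)
          have e : C * (2:ℝ) ^ (2*j) * ((2:ℝ) ^ (4*j) * a)⁻¹
              = 4 * C * (a⁻¹ * (2:ℝ) ^ (-(2*(m+1)))) * G j := by
            rw [hG2 j]
            have hja : |j - m| = j - m := abs_of_nonneg (by omega : (0:ℤ) ≤ j - m)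
            rw [hja]
            have h2 : (2:ℝ) ≠ 0 := two_ne_zero
            field_simp
            rw [show (4:ℝ) = (2:ℝ)^(2:ℤ) by norm_num]
            rw [← zpow_add₀ h2, ← zpow_add₀ h2, ← zpow_add₀ h2]
            congr 1
            ring
          calc ‖K j x y‖ ≤ C * (2:ℝ) ^ (2*j) * (1 + (2:ℝ) ^ (4*j) * a)⁻¹ := hb
            _ ≤ C * (2:ℝ) ^ (2*j) * ((2:ℝ) ^ (4*j) * a)⁻¹ :=
                mul_le_mul_of_nonneg_left h1 (by positivity)
            _ = 4 * C * (a⁻¹ * (2:ℝ) ^ (-(2*(m+1)))) * G j := e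
            _ ≤ 4*C*s⁻¹*(G j) := by
                apply mul_le_mul_of_nonneg_right _ (hGpos j).le
                exact mul_le_mul_of_nonneg_left h2m' (by positivity)
      rw [hh_def]; simp only [if_neg (not_le.mpr hj)]
      linarith
  -- summability of h
  have hsum1 : Summable (fun j : ℤ => 4*C*s⁻¹*(G j)) := hGsum.mul_left _
  have hsum2 : Summable (fun j : ℤ => if |j - j₀| ≤ 2 then C*s⁻¹ else 0) := by
    apply summable_of_finite_support
    apply Set.Finite.subset (Set.finite_Icc (j₀-2) (j₀+2))
    intro j hj
    simp only [Function.mem_support, ne_eq, ite_eq_right_iff, not_forall] at hj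
    have h' := abs_le.mp hj.1
    simp only [Set.mem_Icc]
    omega
  have hsumh : Summable h := hsum1.add hsum2
  have hsumK : Summable (fun j : ℤ => ‖K j x y‖) :=
    Summable.of_nonneg_of_le (fun j => norm_nonneg _) key hsumh
  refine ⟨hsumK, ?_⟩
  -- bound the tsum of the indicator part
  have htsum2 : ∑' j : ℤ, (if |j - j₀| ≤ 2 then C*s⁻¹ else 0) ≤ 5 * (C * s⁻¹) := by
    have heq : ∑' j : ℤ, (if |j - j₀| ≤ 2 then C*s⁻¹ else 0)
        = ∑ j ∈ Finset.Icc (j₀-2) (j₀+2), (if |j - j₀| ≤ 2 then C*s⁻¹ else 0) := by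
      apply tsum_eq_sum
      intro b hb
      rw [Finset.mem_Icc] at hb
      rw [if_neg (fun hc => hb (by have := abs_le.mp hc; omega))]
    rw [heq]
    calc ∑ j ∈ Finset.Icc (j₀-2) (j₀+2), (if |j - j₀| ≤ 2 then C*s⁻¹ else 0)
        ≤ ∑ j ∈ Finset.Icc (j₀-2) (j₀+2), (C*s⁻¹) := by
          apply Finset.sum_le_sum
          intro i _
          split
          · exact le_refl _
          · positivity
      _ = ((Finset.Icc (j₀-2) (j₀+2)).card : ℝ) * (C*s⁻¹) := by
          rw [Finset.sum_const, nsmul_eq_mul]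
      _ = 5 * (C * s⁻¹) := by
          have hcard : (Finset.Icc (j₀-2) (j₀+2)).card = 5 := by
            rw [Int.card_Icc]; omega
          rw [hcard]; norm_num
  have hbound : ∑' j : ℤ, ‖K j x y‖ ≤ 12 * C * s⁻¹ := by
    calc ∑' j : ℤ, ‖K j x y‖ ≤ ∑' j, h j := Summable.tsum_le_tsum key hsumK hsumh
      _ = (∑' j, 4*C*s⁻¹*(G j)) + ∑' j : ℤ, (if |j - j₀| ≤ 2 then C*s⁻¹ else 0) :=
          Summable.tsum_add hsum1 hsum2
      _ = 4*C*s⁻¹*(5/3) + ∑' j : ℤ, (if |j - j₀| ≤ 2 then C*s⁻¹ else 0) := by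
          rw [tsum_mul_left, hGtsum]
      _ ≤ 4*C*s⁻¹*(5/3) + 5 * (C * s⁻¹) := by linarith
      _ ≤ 12 * C * s⁻¹ := by nlinarith [mul_pos hC (inv_pos.mpr hs)]
  calc ‖∑' j : ℤ, K j x y‖ ≤ ∑' j : ℤ, ‖K j x y‖ := norm_tsum_le_tsum_norm hsumK
    _ ≤ 12 * C * s⁻¹ := hbound
    _ = 12 * C * a ^ (-(1:ℝ)/2) := by rw [hts]
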